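/- For every L > 0 and ρ₁,ρ₂ ∈ [0,1), the Bhattacharyya contrast d_B(ρ₁,ρ₂|L) = L·[½(log(1-ρ₁²)+log(1-ρ₂²)) − 2·log 2 + log((4−(ρ₁+ρ₂)²)/((1-ρ₁²)(1-ρ₂²)))] is nonnegative and equals zero if and only if ρ₁ = ρ₂. -/
import Mathlib


noncomputable def dB (L r1 r2 : ℝ) : ℝ :=
  L * ((Real.log (1 - r1 ^ 2) + Real.log (1 - r2 ^ 2)) / 2 - 2 * Real.log 2 +
    Real.log ((4 - (r1 + r2) ^ 2) / ((1 - r1 ^ 2) * (1 - r2 ^ 2))))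

theorem stmt_5 (L r1 r2 : ℝ) (hL : 0 < L)
    (h1 : r1 ∈ Set.Ico (0 : ℝ) 1) (h2 : r2 ∈ Set.Ico (0 : ℝ) 1) :
    0 ≤ dB L r1 r2 ∧ (dB L r1 r2 = 0 ↔ r1 = r2) := by
  obtain ⟨h1a, h1b⟩ := h1
  obtain ⟨h2a, h2b⟩ := h2
  have ha : (0:ℝ) < 1 - r1 ^ 2 := by nlinarith
  have hb : (0:ℝ) < 1 - r2 ^ 2 := by nlinarith
  have hc : (0:ℝ) < 4 - (r1 + r2) ^ 2 := by nlinarith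
  set a := 1 - r1 ^ 2 with hadef
  set b := 1 - r2 ^ 2 with hbdef
  set c := 4 - (r1 + r2) ^ 2 with hcdef
  have hX : 16 * (a * b) ≤ c ^ 2 := by
    rw [hadef, hbdef, hcdef]
    nlinarith [sq_nonneg (r1 - r2), sq_nonneg (r1 + r2), mul_nonneg h1a h2a]
  have h16 : Real.log 16 = 4 * Real.log 2 := by
    rw [show (16:ℝ) = 2 ^ 4 by norm_num, Real.log_pow]; push_cast; ring
  have hrw : dB L r1 r2 = L * (Real.log (c ^ 2 / (16 * (a * b))) / 2) := by
    unfold dB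
    rw [← hadef, ← hbdef, ← hcdef,
      Real.log_div hc.ne' (by positivity),
      Real.log_div (by positivity) (by positivity),
      Real.log_mul ha.ne' hb.ne',
      Real.log_mul (by norm_num : (16:ℝ) ≠ 0) (by positivity),
      Real.log_mul ha.ne' hb.ne', Real.log_pow, h16]
    push_cast; ring
  have hX1 : (1:ℝ) ≤ c ^ 2 / (16 * (a * b)) := (one_le_div (by positivity)).2 hX
  have hlog0 : 0 ≤ Real.log (c ^ 2 / (16 * (a * b))) := Real.log_nonneg hX1
  constructor
  · rw [hrw]; positivity
  · rw [hrw]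
    constructor
    · intro h
      have hlog : Real.log (c ^ 2 / (16 * (a * b))) = 0 := by
        rcases mul_eq_zero.1 h with h' | h'
        · exact absurd h' hL.ne'
        · linarith
      have hXeq : c ^ 2 / (16 * (a * b)) = 1 := by
        rcases Real.log_eq_zero.1 hlog with h' | h' | h' <;> linarith
      have hceq : c ^ 2 = 16 * (a * b) := by
        field_simp at hXeq; linarith
      have hsq : (r1 - r2) ^ 2 = 0 := by
        rw [hadef, hbdef, hcdef] at hceq
        nlinarith [sq_nonneg (r1 - r2), sq_nonneg (r1 + r2), mul_nonneg h1a h2a]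
      have := pow_eq_zero_iff (n := 2) (by norm_num) |>.1 hsq
      linarith
    · intro h
      subst h
      have hceq : c ^ 2 / (16 * (a * b)) = 1 := by
        rw [hadef, hbdef, hcdef]
        rw [div_eq_one_iff_eq (by positivity)]
        ring
      rw [hceq, Real.log_one]; ring
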